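/- Let m ≥ 1 be an integer, R > 0, and ζ = exp(2πi/m). Let Ψ : ℂ → ℂ be holomorphic on the region A = {z ∈ ℂ : |z| > R}, satisfy Ψ(ζz) = ζΨ(z) for all z ∈ A, and satisfy |Ψ(z)| → ∞ as |z| → ∞. Let n ≥ 1 be an integer, F a polynomial with complex coefficients, and (c_k)_{k≥1} a sequence of complex numbers such that for every z ∈ A the series Σ_{k≥1} c_k z^{−k} converges unconditionally (HasSum) with sum F(Ψ(z)) − z^n. Then c_k = 0 for every k ≥ 1 such that n + k is not divisible by m. -/

import Mathlib

open Filter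

/-- Geometric tail bound for an inverse-power series. -/
private lemma grunsky_tsum_bound (a : ℕ → ℂ) (s M : ℝ) (hs : 0 < s) (hM : 0 ≤ M)
    (hb : ∀ k, ‖a k‖ ≤ M * s ^ (k + 1)) {z : ℂ} (hz : 2 * s ≤ ‖z‖) :
    ‖∑' k : ℕ, a k / z ^ (k + 1)‖ ≤ 2 * M * s / ‖z‖ := by
  have hz0 : (0 : ℝ) < ‖z‖ := lt_of_lt_of_le (by positivity) hz
  have hq : s / ‖z‖ ≤ 1 / 2 := by rw [div_le_div_iff₀ hz0 two_pos]; linarith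
  have hq0 : 0 ≤ s / ‖z‖ := by positivity
  have key : ∀ k : ℕ, ‖a k / z ^ (k + 1)‖ ≤ (M * s / ‖z‖) * (1 / 2 : ℝ) ^ k := by
    intro k
    rw [norm_div, norm_pow]
    have h1 : ‖a k‖ / ‖z‖ ^ (k + 1) ≤ M * s ^ (k + 1) / ‖z‖ ^ (k + 1) := by
      apply div_le_div_of_nonneg_right (hb k) (by positivity) |>.trans_eq rfl
    have h2 : M * s ^ (k + 1) / ‖z‖ ^ (k + 1) = (M * s / ‖z‖) * (s / ‖z‖) ^ k := by
      ring
    have h3 : (s / ‖z‖) ^ k ≤ (1 / 2 : ℝ) ^ k := pow_le_pow_left₀ hq0 hq k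
    calc ‖a k‖ / ‖z‖ ^ (k + 1) ≤ M * s ^ (k + 1) / ‖z‖ ^ (k + 1) := h1
      _ = (M * s / ‖z‖) * (s / ‖z‖) ^ k := h2
      _ ≤ (M * s / ‖z‖) * (1 / 2 : ℝ) ^ k := by
          apply mul_le_mul_of_nonneg_left h3 (by positivity)
  have hgeom : Summable (fun k : ℕ => (M * s / ‖z‖) * (1 / 2 : ℝ) ^ k) :=
    (summable_geometric_of_lt_one (by norm_num) (by norm_num)).mul_left _
  have hsn : Summable (fun k : ℕ => ‖a k / z ^ (k + 1)‖) :=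
    Summable.of_nonneg_of_le (fun k => norm_nonneg _) key hgeom
  calc ‖∑' k : ℕ, a k / z ^ (k + 1)‖ ≤ ∑' k : ℕ, ‖a k / z ^ (k + 1)‖ :=
        norm_tsum_le_tsum_norm hsn
    _ ≤ ∑' k : ℕ, (M * s / ‖z‖) * (1 / 2 : ℝ) ^ k := Summable.tsum_le_tsum key hsn hgeom
    _ = (M * s / ‖z‖) * (1 - 1 / 2 : ℝ)⁻¹ := by
        rw [tsum_mul_left, tsum_geometric_of_lt_one (by norm_num) (by norm_num)]
    _ = 2 * M * s / ‖z‖ := by norm_num; ring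

/-- From summability at one real point `> R`, get a geometric bound on coefficients. -/
private lemma grunsky_exists_bound (R : ℝ) (hR : 0 < R) (a : ℕ → ℂ)
    (h : Summable (fun k : ℕ => a k / ((R + 1 : ℝ) : ℂ) ^ (k + 1))) :
    ∃ M : ℝ, 0 ≤ M ∧ ∀ k, ‖a k‖ ≤ M * (R + 1) ^ (k + 1) := by
  have hs : (0 : ℝ) < R + 1 := by linarith
  have ht : Tendsto (fun k : ℕ => ‖a k / ((R + 1 : ℝ) : ℂ) ^ (k + 1)‖) atTop (nhds 0) := by
    simpa using h.tendsto_atTop_zero.norm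
  obtain ⟨M, hM⟩ := ht.bddAbove_range
  have hM' : ∀ k, ‖a k / ((R + 1 : ℝ) : ℂ) ^ (k + 1)‖ ≤ M := fun k =>
    hM (Set.mem_range_self k)
  refine ⟨M, le_trans (norm_nonneg _) (hM' 0), fun k => ?_⟩
  have hnorm : ‖a k / ((R + 1 : ℝ) : ℂ) ^ (k + 1)‖ = ‖a k‖ / (R + 1) ^ (k + 1) := by
    rw [norm_div, norm_pow, Complex.norm_real, Real.norm_eq_abs, abs_of_pos hs]
  have := hM' k
  rw [hnorm, div_le_iff₀ (by positivity)] at this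
  linarith [this]

/-- Uniqueness of Laurent coefficients: if `∑ aₖ z^{-(k+1)} = 0` for all `|z| > R`,
then all `aₖ` vanish. -/
private lemma grunsky_laurent_zero (R : ℝ) (hR : 0 < R) (a : ℕ → ℂ)
    (h : ∀ z : ℂ, R < ‖z‖ → HasSum (fun k : ℕ => a k / z ^ (k + 1)) 0) :
    ∀ k, a k = 0 := by
  intro k
  induction k using Nat.strong_induction_on with
  | _ k ih =>
    set b : ℕ → ℂ := fun j => a (j + k) with hb
    have h' : ∀ z : ℂ, R < ‖z‖ → HasSum (fun j : ℕ => b j / z ^ (j + 1)) 0 := by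
      intro z hz
      have hz0 : z ≠ 0 := by
        intro h0; rw [h0] at hz; simp at hz; linarith
      have hsum0 : ∑ i ∈ Finset.range k, a i / z ^ (i + 1) = 0 :=
        Finset.sum_eq_zero fun i hi => by rw [ih i (Finset.mem_range.mp hi)]; simp
      have h2 : HasSum (fun j : ℕ => a (j + k) / z ^ (j + k + 1)) 0 :=
        (hasSum_nat_add_iff (f := fun i => a i / z ^ (i + 1)) k).mpr
          (by rw [hsum0, add_zero]; exact h z hz)
      have h3 := h2.mul_right (z ^ k)
      rw [zero_mul] at h3
      have heq : (fun j : ℕ => a (j + k) / z ^ (j + k + 1) * z ^ k)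
          = fun j : ℕ => b j / z ^ (j + 1) := funext fun j => by
        rw [show j + k + 1 = (j + 1) + k from by ring, pow_add, ← div_div,
          div_mul_cancel₀ _ (pow_ne_zero k hz0)]
      rwa [heq] at h3
    -- bound on b
    have hs : (0 : ℝ) < R + 1 := by linarith
    have hRlt : R < ‖((R + 1 : ℝ) : ℂ)‖ := by
      rw [Complex.norm_real, Real.norm_eq_abs, abs_of_pos hs]; linarith
    obtain ⟨M, hM0, hM⟩ := grunsky_exists_bound R hR b (h' _ hRlt).summable
    -- express b 0 as a tail sum
    have key : ∀ t : ℝ, 2 * (R + 1) ≤ t → ‖b 0‖ ≤ 2 * (M * (R + 1)) * (R + 1) / t := by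
      intro t ht
      have ht0 : (0 : ℝ) < t := lt_of_lt_of_le (by linarith) ht
      have htz : R < ‖(t : ℂ)‖ := by
        rw [Complex.norm_real, Real.norm_eq_abs, abs_of_pos ht0]; linarith
      have htz0 : (t : ℂ) ≠ 0 := by
        simpa using ht0.ne'
      have h4 : HasSum (fun j : ℕ => b (j + 1) / (t : ℂ) ^ (j + 1 + 1)) (-(b 0 / (t : ℂ) ^ (0 + 1))) :=
        (hasSum_nat_add_iff (f := fun i => b i / (t : ℂ) ^ (i + 1)) 1).mpr (by
          rw [Finset.sum_range_one, neg_add_cancel]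
          exact h' _ htz)
      have h5 := h4.mul_right (t : ℂ)
      have h6 : HasSum (fun j : ℕ => b (j + 1) / (t : ℂ) ^ (j + 1)) (-(b 0)) := by
        have hrhs : (-(b 0 / (t : ℂ) ^ (0 + 1))) * (t : ℂ) = -(b 0) := by
          rw [pow_one, neg_mul, div_mul_cancel₀ _ htz0]
        rw [hrhs] at h5
        have heq : (fun j : ℕ => b (j + 1) / (t : ℂ) ^ (j + 1 + 1) * (t : ℂ))
            = fun j : ℕ => b (j + 1) / (t : ℂ) ^ (j + 1) := funext fun j => by
          rw [show j + 1 + 1 = (j + 1) + 1 from rfl, pow_succ, ← div_div,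
            div_mul_cancel₀ _ htz0]
        rwa [heq] at h5
      have hbnd : ∀ j, ‖b (j + 1)‖ ≤ (M * (R + 1)) * (R + 1) ^ (j + 1) := by
        intro j
        calc ‖b (j + 1)‖ ≤ M * (R + 1) ^ (j + 1 + 1) := hM (j + 1)
          _ = (M * (R + 1)) * (R + 1) ^ (j + 1) := by ring
      have hzt : 2 * (R + 1) ≤ ‖(t : ℂ)‖ := by
        rw [Complex.norm_real, Real.norm_eq_abs, abs_of_pos ht0]; exact ht
      have := grunsky_tsum_bound (fun j => b (j + 1)) (R + 1) (M * (R + 1)) hs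
        (by positivity) hbnd hzt
      rw [h6.tsum_eq, norm_neg] at this
      calc ‖b 0‖ ≤ 2 * (M * (R + 1)) * (R + 1) / ‖(t : ℂ)‖ := this
        _ = 2 * (M * (R + 1)) * (R + 1) / t := by
            rw [Complex.norm_real, Real.norm_eq_abs, abs_of_pos ht0]
    have hlim : Tendsto (fun t : ℝ => 2 * (M * (R + 1)) * (R + 1) / t) atTop (nhds 0) :=
      Tendsto.div_atTop tendsto_const_nhds tendsto_id
    have hle : ‖b 0‖ ≤ 0 :=
      ge_of_tendsto hlim (eventually_atTop.mpr ⟨2 * (R + 1), key⟩)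
    have : b 0 = 0 := norm_le_zero_iff.mp hle
    simpa [hb] using this

/-- For an `m`-fold rotationally symmetric exterior conformal map `Ψ`, the Grunsky
coefficients `c_{n,k}` vanish unless `n + k ≡ 0 (mod m)`. -/
theorem grunsky_vanish_of_rotational_symmetry
    (m : ℕ) (hm : 1 ≤ m) (R : ℝ) (hR : 0 < R)
    (ζ : ℂ) (hζ : ζ = Complex.exp (2 * Real.pi * Complex.I / m))
    (Ψ : ℂ → ℂ)
    (hΨ : DifferentiableOn ℂ Ψ {z : ℂ | R < ‖z‖})
    (hsym : ∀ z : ℂ, R < ‖z‖ → Ψ (ζ * z) = ζ * Ψ z)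
    (hinf : Tendsto (fun z : ℂ => ‖Ψ z‖) (comap norm atTop) atTop)
    (n : ℕ) (hn : 1 ≤ n) (F : Polynomial ℂ) (c : ℕ → ℂ)
    (hser : ∀ z : ℂ, R < ‖z‖ →
      HasSum (fun k : ℕ => c (k + 1) / z ^ (k + 1)) (F.eval (Ψ z) - z ^ n)) :
    ∀ k : ℕ, 1 ≤ k → ¬ (m ∣ (n + k)) → c k = 0 := by
  -- basic facts about ζ
  have hζnorm : ‖ζ‖ = 1 := by
    have : (2 : ℂ) * Real.pi * Complex.I / m = ((2 * Real.pi / m : ℝ) : ℂ) * Complex.I := by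
      push_cast; ring
    rw [hζ, this]
    exact Complex.norm_exp_ofReal_mul_I _
  have hζ0 : ζ ≠ 0 := by rw [hζ]; exact Complex.exp_ne_zero _
  have hprim : IsPrimitiveRoot ζ m := hζ ▸ Complex.isPrimitiveRoot_exp m (by omega)
  -- the Laurent tail function
  set g : ℂ → ℂ := fun z => ∑' k : ℕ, c (k + 1) / z ^ (k + 1) with hgdef
  have hg : ∀ z : ℂ, R < ‖z‖ → g z = F.eval (Ψ z) - z ^ n := fun z hz => (hser z hz).tsum_eq
  -- coefficient bound
  have hs : (0 : ℝ) < R + 1 := by linarith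
  have hRlt : R < ‖((R + 1 : ℝ) : ℂ)‖ := by
    rw [Complex.norm_real, Real.norm_eq_abs, abs_of_pos hs]; linarith
  obtain ⟨M, hM0, hM⟩ := grunsky_exists_bound R hR (fun k => c (k + 1))
    (hser _ hRlt).summable
  have gbound : ∀ z : ℂ, 2 * (R + 1) ≤ ‖z‖ → ‖g z‖ ≤ 2 * M * (R + 1) / ‖z‖ :=
    fun z hz => grunsky_tsum_bound (fun k => c (k + 1)) (R + 1) M hs hM0 hM hz
  -- polynomial P(w) = F(ζw) - ζⁿ F(w)
  set P : Polynomial ℂ := F.comp (Polynomial.C ζ * Polynomial.X) - Polynomial.C (ζ ^ n) * F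
    with hPdef
  have hPeval : ∀ w : ℂ, P.eval w = F.eval (ζ * w) - ζ ^ n * F.eval w := by
    intro w; simp [hPdef, Polynomial.eval_comp]
  -- P(Ψ z) = g(ζ z) - ζⁿ g(z) on the exterior
  have hH : ∀ z : ℂ, R < ‖z‖ → P.eval (Ψ z) = g (ζ * z) - ζ ^ n * g z := by
    intro z hz
    have hz' : R < ‖ζ * z‖ := by rw [norm_mul, hζnorm, one_mul]; exact hz
    rw [hPeval, hg _ hz, hg _ hz', hsym z hz, mul_pow]
    ring
  -- limits along the positive real axis
  have hcoe : Tendsto (fun t : ℝ => (t : ℂ)) atTop (comap norm atTop) := by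
    rw [tendsto_comap_iff]
    have : (norm ∘ fun t : ℝ => (t : ℂ)) = fun t : ℝ => |t| := by
      funext t; simp [Complex.norm_real]
    rw [this]
    exact tendsto_abs_atTop_atTop
  have hΨt : Tendsto (fun t : ℝ => ‖Ψ ((t : ℂ))‖) atTop atTop := hinf.comp hcoe
  have hrate : Tendsto (fun t : ℝ => 2 * M * (R + 1) / t) atTop (nhds 0) :=
    Tendsto.div_atTop tendsto_const_nhds tendsto_id
  have hgt : Tendsto (fun t : ℝ => g ((t : ℂ))) atTop (nhds 0) := by
    apply squeeze_zero_norm' _ hrate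
    filter_upwards [eventually_ge_atTop (2 * (R + 1))] with t ht
    have ht0 : (0 : ℝ) < t := lt_of_lt_of_le (by linarith) ht
    have hnt : ‖(t : ℂ)‖ = t := by
      rw [Complex.norm_real, Real.norm_eq_abs, abs_of_pos ht0]
    have := gbound (t : ℂ) (by rw [hnt]; exact ht)
    rwa [hnt] at this
  have hgζt : Tendsto (fun t : ℝ => g (ζ * (t : ℂ))) atTop (nhds 0) := by
    apply squeeze_zero_norm' _ hrate
    filter_upwards [eventually_ge_atTop (2 * (R + 1))] with t ht
    have ht0 : (0 : ℝ) < t := lt_of_lt_of_le (by linarith) ht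
    have hnt : ‖ζ * (t : ℂ)‖ = t := by
      rw [norm_mul, hζnorm, one_mul, Complex.norm_real, Real.norm_eq_abs, abs_of_pos ht0]
    have := gbound (ζ * (t : ℂ)) (by rw [hnt]; exact ht)
    rwa [hnt] at this
  have hPlim : Tendsto (fun t : ℝ => P.eval (Ψ ((t : ℂ)))) atTop (nhds 0) := by
    have h1 : Tendsto (fun t : ℝ => g (ζ * (t : ℂ)) - ζ ^ n * g ((t : ℂ))) atTop (nhds 0) := by
      have := hgζt.sub (hgt.const_mul (ζ ^ n))
      simpa using this
    apply h1.congr'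
    filter_upwards [eventually_gt_atTop R] with t ht
    have ht0 : (0 : ℝ) < t := lt_trans hR ht
    have : R < ‖(t : ℂ)‖ := by
      rw [Complex.norm_real, Real.norm_eq_abs, abs_of_pos ht0]; exact ht
    exact (hH _ this).symm
  -- P must be the zero polynomial
  have hPzero : ∀ w : ℂ, P.eval w = 0 := by
    by_cases hdeg : 0 < P.degree
    · exfalso
      have hbig : Tendsto (fun t : ℝ => ‖P.eval (Ψ ((t : ℂ)))‖) atTop atTop :=
        P.tendsto_norm_atTop hdeg hΨt
      exact not_tendsto_nhds_of_tendsto_atTop hbig 0 (by simpa using hPlim.norm)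
    · have hC : P = Polynomial.C (P.coeff 0) :=
        Polynomial.eq_C_of_degree_le_zero (le_of_not_gt hdeg)
      have hc0 : P.coeff 0 = 0 := by
        apply tendsto_nhds_unique (l := atTop (α := ℝ)) _ hPlim
        have : (fun t : ℝ => P.eval (Ψ ((t : ℂ)))) = fun _ => P.coeff 0 := by
          funext t; rw [hC]; simp
        rw [this]
        exact tendsto_const_nhds
      intro w
      rw [hC, hc0]; simp
  have hkey : ∀ w : ℂ, F.eval (ζ * w) = ζ ^ n * F.eval w := by
    intro w
    have := hPzero w
    rw [hPeval] at this
    exact sub_eq_zero.mp this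
  -- Laurent coefficients of g(ζz) - ζⁿ g(z) all vanish
  have ha : ∀ k : ℕ, c (k + 1) * ((ζ ^ (k + 1))⁻¹ - ζ ^ n) = 0 := by
    apply grunsky_laurent_zero R hR
    intro z hz
    have hz' : R < ‖ζ * z‖ := by rw [norm_mul, hζnorm, one_mul]; exact hz
    have hz0 : z ≠ 0 := by
      intro h0; rw [h0] at hz; simp at hz; linarith
    have h1 := hser (ζ * z) hz'
    rw [hsym z hz, hkey, mul_pow] at h1
    have h2 := (hser z hz).mul_left (ζ ^ n)
    have h3 := h1.sub h2
    have hr : ζ ^ n * F.eval (Ψ z) - ζ ^ n * z ^ n - ζ ^ n * (F.eval (Ψ z) - z ^ n) = 0 := by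
      ring
    rw [hr] at h3
    have heq : (fun k : ℕ => c (k + 1) / ((ζ * z) ^ (k + 1)) - ζ ^ n * (c (k + 1) / z ^ (k + 1)))
        = fun k : ℕ => c (k + 1) * ((ζ ^ (k + 1))⁻¹ - ζ ^ n) / z ^ (k + 1) := funext fun k => by
      rw [mul_pow]
      field_simp
    rwa [heq] at h3
  intro k hk hdvd
  obtain ⟨j, rfl⟩ : ∃ j, k = j + 1 := ⟨k - 1, by omega⟩
  have hfac : (ζ ^ (j + 1))⁻¹ - ζ ^ n ≠ 0 := by
    intro h0
    have h1 : (ζ ^ (j + 1))⁻¹ = ζ ^ n := sub_eq_zero.mp h0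
    have h2 : ζ ^ (n + (j + 1)) = 1 := by
      rw [pow_add, ← h1, inv_mul_cancel₀ (pow_ne_zero _ hζ0)]
    exact hdvd ((hprim.pow_eq_one_iff_dvd _).mp h2)
  exact (mul_eq_zero.mp (ha j)).resolve_right hfac
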